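/- arXiv:1601.02390 — 4 statements merged into one kernel-verified Lean document; each statement's English description precedes it below -/
import Mathlib

section
/- For every T > 0, the Volterra function of order −1, I(t) = ∫₀^∞ t^(σ−1)/Γ(σ) dσ, is (Lebesgue) integrable on the interval (0, T). -/
open MeasureTheory Real

open Set
open scoped ENNReal NNReal

lemma gamma_lb {a σ : ℝ} (ha : 0 < a) (hσ : 0 ≤ σ) :
    a ^ σ * Real.exp (-a) ≤ Real.Gamma (σ + 1) := by
  rw [Real.Gamma_eq_integral (by linarith)]
  simp only [add_sub_cancel_right]
  have hint0 : IntegrableOn (fun x => Real.exp (-x) * x ^ σ) (Ioi 0) := by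
    have := Real.GammaIntegral_convergent (s := σ + 1) (by linarith)
    simpa using this
  have hintc : IntegrableOn (fun x => Real.exp (-x) * a ^ σ) (Ioi a) := by
    have h := (exp_neg_integrableOn_Ioi a (b := 1) one_pos).mul_const (a ^ σ)
    simpa [IntegrableOn] using h
  have h1 : a ^ σ * Real.exp (-a) = ∫ x in Ioi a, Real.exp (-x) * a ^ σ := by
    rw [integral_mul_const, integral_exp_neg_Ioi]; ring
  rw [h1]
  have step1 : (∫ x in Ioi a, Real.exp (-x) * a ^ σ)
      ≤ ∫ x in Ioi a, Real.exp (-x) * x ^ σ := by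
    refine setIntegral_mono_on hintc (hint0.mono_set (Ioi_subset_Ioi ha.le))
      measurableSet_Ioi fun x hx => ?_
    exact mul_le_mul_of_nonneg_left
      (Real.rpow_le_rpow ha.le (le_of_lt hx) hσ) (Real.exp_pos _).le
  refine step1.trans ?_
  refine setIntegral_mono_set hint0 ?_ (HasSubset.Subset.eventuallyLE (Ioi_subset_Ioi ha.le))
  filter_upwards [ae_restrict_mem measurableSet_Ioi] with x hx
  exact mul_nonneg (Real.exp_pos _).le (Real.rpow_nonneg (le_of_lt hx) _)

lemma inner_eq {T σ : ℝ} (hT : 0 < T) (hσ : 0 < σ) :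
    ∫⁻ t in Ioo (0:ℝ) T, ENNReal.ofReal (t ^ (σ - 1) / Real.Gamma σ)
      = ENNReal.ofReal (T ^ σ / σ / Real.Gamma σ) := by
  have hint : IntegrableOn (fun t : ℝ => t ^ (σ - 1) / Real.Gamma σ) (Ioo 0 T) :=
    ((intervalIntegral.integrableOn_Ioo_rpow_iff hT).2 (by linarith)).div_const _
  rw [← ofReal_integral_eq_lintegral_ofReal hint ?nn]
  case nn =>
    filter_upwards [ae_restrict_mem measurableSet_Ioo] with t ht
    exact div_nonneg (Real.rpow_nonneg ht.1.le _) (Real.Gamma_pos_of_pos hσ).le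
  congr 1
  rw [integral_div]
  congr 1
  rw [← integral_Ioc_eq_integral_Ioo, ← intervalIntegral.integral_of_le hT.le,
    _root_.integral_rpow (Or.inl (by linarith))]
  have h1 : σ - 1 + 1 = σ := by ring
  rw [h1, Real.zero_rpow hσ.ne', sub_zero]

lemma key_bound {T σ : ℝ} (hT : 0 < T) (hσ : 0 < σ) :
    T ^ σ / σ / Real.Gamma σ ≤ Real.exp (2 * T) * Real.exp (-Real.log 2 * σ) := by
  have hG : Real.Gamma (σ + 1) = σ * Real.Gamma σ := Real.Gamma_add_one hσ.ne'
  have hgl := gamma_lb (a := 2 * T) (by linarith) hσ.le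
  have hc : (0:ℝ) < (2 * T) ^ σ * Real.exp (-(2 * T)) :=
    mul_pos (Real.rpow_pos_of_pos (by linarith) _) (Real.exp_pos _)
  have h2 : T ^ σ / σ / Real.Gamma σ = T ^ σ / Real.Gamma (σ + 1) := by
    rw [hG, div_div]
  rw [h2]
  calc T ^ σ / Real.Gamma (σ + 1)
      ≤ T ^ σ / ((2 * T) ^ σ * Real.exp (-(2 * T))) :=
        div_le_div_of_nonneg_left (Real.rpow_nonneg hT.le _) hc hgl
    _ = (T ^ σ / (2 * T) ^ σ) * Real.exp (2 * T) := by
        rw [Real.exp_neg]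
        field_simp
    _ = Real.exp (2 * T) * Real.exp (-Real.log 2 * σ) := by
        rw [← Real.div_rpow hT.le (by linarith)]
        have h3 : T / (2 * T) = 1 / 2 := by
          field_simp
        rw [h3]
        have h4 : ((1:ℝ)/2) ^ σ = Real.exp (-Real.log 2 * σ) := by
          rw [Real.rpow_def_of_pos (by norm_num), one_div, Real.log_inv]
        rw [h4]; ring

lemma volterra_prod_integrable (T : ℝ) (hT : 0 < T) :
    Integrable (fun p : ℝ × ℝ => p.1 ^ (p.2 - 1) / Real.Gamma p.2)
      ((volume.restrict (Ioo (0:ℝ) T)).prod (volume.restrict (Ioi (0:ℝ)))) := by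
  have hS : MeasurableSet (Ioo (0:ℝ) T ×ˢ Ioi (0:ℝ)) :=
    measurableSet_Ioo.prod measurableSet_Ioi
  have hprod : (volume.restrict (Ioo (0:ℝ) T)).prod (volume.restrict (Ioi (0:ℝ)))
      = (volume : Measure (ℝ × ℝ)).restrict (Ioo (0:ℝ) T ×ˢ Ioi (0:ℝ)) := by
    rw [Measure.prod_restrict, ← Measure.volume_eq_prod]
  have hcont : ContinuousOn (fun p : ℝ × ℝ => p.1 ^ (p.2 - 1) / Real.Gamma p.2)
      (Ioo (0:ℝ) T ×ˢ Ioi (0:ℝ)) := by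
    apply ContinuousOn.div
    · refine ContinuousOn.rpow continuous_fst.continuousOn
        ((continuous_snd.sub continuous_const).continuousOn) fun p hp => ?_
      exact Or.inl (ne_of_gt hp.1.1)
    · intro p hp
      refine ContinuousAt.continuousWithinAt ?_
      have hg : ContinuousAt Real.Gamma p.2 := by
        refine (Real.differentiableAt_Gamma fun m => ?_).continuousAt
        have h1 : (0:ℝ) < p.2 := hp.2
        have h2 : -(m:ℝ) ≤ 0 := by
          simp [neg_nonpos]
        intro h
        rw [h] at h1
        linarith
      exact ContinuousAt.comp (g := Real.Gamma) (f := fun q : ℝ × ℝ => q.2) hg continuous_snd.continuousAt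
    · intro p hp
      exact (Real.Gamma_pos_of_pos hp.2).ne'
  have hfm : AEStronglyMeasurable (fun p : ℝ × ℝ => p.1 ^ (p.2 - 1) / Real.Gamma p.2)
      ((volume.restrict (Ioo (0:ℝ) T)).prod (volume.restrict (Ioi (0:ℝ)))) := by
    rw [hprod]; exact hcont.aestronglyMeasurable hS
  refine ⟨hfm, ?_⟩
  have hnn : ∀ᵐ (p : ℝ × ℝ) ∂((volume.restrict (Ioo (0:ℝ) T)).prod (volume.restrict (Ioi (0:ℝ)))),
      ‖p.1 ^ (p.2 - 1) / Real.Gamma p.2‖ₑ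
        = ENNReal.ofReal (p.1 ^ (p.2 - 1) / Real.Gamma p.2) := by
    rw [hprod]
    filter_upwards [ae_restrict_mem hS] with p hp
    exact Real.enorm_eq_ofReal
      (div_nonneg (Real.rpow_nonneg hp.1.1.le _) (Real.Gamma_pos_of_pos hp.2).le)
  have hmeas : AEMeasurable
      (fun p : ℝ × ℝ => ENNReal.ofReal (p.1 ^ (p.2 - 1) / Real.Gamma p.2))
      ((volume.restrict (Ioo (0:ℝ) T)).prod (volume.restrict (Ioi (0:ℝ)))) :=
    ENNReal.measurable_ofReal.comp_aemeasurable hfm.aemeasurable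
  rw [HasFiniteIntegral, lintegral_congr_ae hnn,
    lintegral_prod_symm _ hmeas]
  have hbound : (∫⁻ σ in Ioi (0:ℝ), ∫⁻ t in Ioo (0:ℝ) T,
        ENNReal.ofReal (t ^ (σ - 1) / Real.Gamma σ))
      ≤ ∫⁻ σ in Ioi (0:ℝ),
        ENNReal.ofReal (Real.exp (2 * T) * Real.exp (-Real.log 2 * σ)) := by
    refine lintegral_mono_ae ?_
    filter_upwards [ae_restrict_mem measurableSet_Ioi] with σ hσ
    rw [inner_eq hT hσ]
    exact ENNReal.ofReal_le_ofReal (key_bound hT hσ)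
  refine lt_of_le_of_lt hbound ?_
  have hI : Integrable (fun σ : ℝ => Real.exp (2 * T) * Real.exp (-Real.log 2 * σ))
      (volume.restrict (Ioi (0:ℝ))) :=
    (exp_neg_integrableOn_Ioi 0 (Real.log_pos one_lt_two)).const_mul _
  refine lt_of_le_of_lt (lintegral_mono fun σ => ?_) hI.2
  rw [Real.enorm_eq_ofReal_abs]
  exact ENNReal.ofReal_le_ofReal (le_abs_self _)


/-- The Volterra function of order `-1`: `I(t) = ∫₀^∞ t^(σ-1)/Γ(σ) dσ`. -/
noncomputable def volterraI (t : ℝ) : ℝ :=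
  ∫ σ in Set.Ioi (0 : ℝ), t ^ (σ - 1) / Real.Gamma σ

/-- For every `T > 0`, the Volterra function of order `-1` is Lebesgue integrable
on `(0, T)`. -/
theorem volterraI_integrableOn (T : ℝ) (hT : 0 < T) :
    IntegrableOn volterraI (Set.Ioo 0 T) volume := by
  have h := (volterra_prod_integrable T hT).integral_prod_left
  exact h
end

section
/- Let a > 0, s ∈ ℝ and T > s. Then: (i) for every τ ∈ (s, T], the improper integral L(τ) := lim_{ε→0⁺} ∫ₛ^{τ−ε} e^{i a²/(4(τ−σ))} / (2 i (τ−σ)) dσ exists in ℂ; (ii) there is a constant C < ∞ (depending only on a and T−s) such that |L(τ)| ≤ C for all τ ∈ (s, T]. -/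
open MeasureTheory Real Filter

/-- The integral kernel of the free two-dimensional Schrödinger propagator `e^{iΔt}`
at time `t` and distance `r`: `U₀(t; r) = e^{i r²/(4t)} / (2 i t)`. -/
noncomputable def U0 (t r : ℝ) : ℂ :=
  Complex.exp (Complex.I * r ^ 2 / (4 * t)) / (2 * Complex.I * t)

/-- The phase factor `E(t) = e^{i a²/(4t)}`. -/
noncomputable def Ephase (a t : ℝ) : ℂ :=
  Complex.exp (Complex.I * a ^ 2 / (4 * t))

lemma Ephase_norm (a t : ℝ) : ‖Ephase a t‖ = 1 := by
  have h : Complex.I * (a:ℂ) ^ 2 / (4 * (t:ℂ)) = ((a ^ 2 / (4 * t) : ℝ) : ℂ) * Complex.I := by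
    push_cast
    ring
  rw [Ephase, h, Complex.norm_exp_ofReal_mul_I]

lemma Ephase_measurable (a : ℝ) : Measurable (Ephase a) := by
  have h : Ephase a = fun t : ℝ => Complex.exp (((a ^ 2 / (4 * t) : ℝ) : ℂ) * Complex.I) := by
    funext t
    rw [Ephase]
    congr 1
    push_cast
    ring
  rw [h]
  exact Complex.measurable_exp.comp
    ((Complex.measurable_ofReal.comp (measurable_const.div ((measurable_id.const_mul 4)))).mul
      measurable_const)

lemma Ephase_continuousAt (a : ℝ) {t : ℝ} (ht : t ≠ 0) : ContinuousAt (Ephase a) t := by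
  have htc : (t : ℂ) ≠ 0 := by exact_mod_cast ht
  have h4 : (4 : ℂ) * (t : ℂ) ≠ 0 := by
    simp [htc]
  exact Complex.continuous_exp.continuousAt.comp
    ((continuousAt_const.div ((continuous_const.mul Complex.continuous_ofReal).continuousAt) h4))

lemma U0_continuousAt (a : ℝ) {t : ℝ} (ht : t ≠ 0) : ContinuousAt (fun t => U0 t a) t := by
  have htc : (t : ℂ) ≠ 0 := by exact_mod_cast ht
  have h2 : (2 : ℂ) * Complex.I * (t : ℂ) ≠ 0 := by
    simp [htc, Complex.I_ne_zero]
  exact (Ephase_continuousAt a ht).div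
    (((continuous_const.mul Complex.continuous_ofReal).continuousAt)) h2

/-- The key derivative computation: `U0 t a = F'(t) - E(t)·(2/a²)` where
`F(t) = E(t)·(2t/a²)`. -/
lemma hasDerivAt_F (a : ℝ) (ha : 0 < a) {t : ℝ} (ht : t ≠ 0) :
    HasDerivAt (fun t : ℝ => Ephase a t * (2 * t / a ^ 2))
      (U0 t a + Ephase a t * (2 / (a:ℂ) ^ 2)) t := by
  have htc : (t : ℂ) ≠ 0 := by exact_mod_cast ht
  have hac : (a : ℂ) ≠ 0 := by exact_mod_cast ha.ne'
  have hinv : HasDerivAt (fun w : ℂ => w⁻¹) (-1 / (t:ℂ) ^ 2) (t:ℂ) := by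
    exact (hasDerivAt_inv htc).congr_deriv (by ring)
  have harg : HasDerivAt (fun w : ℂ => Complex.I * a ^ 2 / (4 * w))
      (Complex.I * a ^ 2 / 4 * (-1 / (t:ℂ) ^ 2)) (t:ℂ) := by
    have := hinv.const_mul (Complex.I * (a:ℂ) ^ 2 / 4)
    refine this.congr_of_eventuallyEq (Filter.Eventually.of_forall fun x => ?_)
    ring
  have hlin : HasDerivAt (fun w : ℂ => (2 * w / (a:ℂ) ^ 2)) (2 / (a:ℂ) ^ 2) (t:ℂ) := by
    simpa using ((hasDerivAt_id ((t:ℂ))).const_mul (2:ℂ)).div_const ((a:ℂ) ^ 2)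
  have hmul := (harg.cexp.mul hlin).comp_ofReal
  rw [U0, Ephase]
  convert hmul using 1
  case e'_8 => rfl
  have hscal : (Complex.I * (a:ℂ) ^ 2 / 4 * (-1 / (t:ℂ) ^ 2)) * (2 * t / (a:ℂ) ^ 2)
      = 1 / (2 * Complex.I * t) := by
    have hI : Complex.I ≠ 0 := Complex.I_ne_zero
    field_simp
    ring_nf
    simp [Complex.I_sq]
  have hkey : Complex.exp (Complex.I * (a:ℂ) ^ 2 / (4 * (t:ℂ))) / (2 * Complex.I * t)
      = Complex.exp (Complex.I * (a:ℂ) ^ 2 / (4 * (t:ℂ)))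
          * (Complex.I * (a:ℂ) ^ 2 / 4 * (-1 / (t:ℂ) ^ 2)) * (2 * (t:ℂ) / (a:ℂ) ^ 2) := by
    rw [mul_assoc (Complex.exp _), hscal, div_eq_mul_one_div]
  rw [hkey]

/-- For `a > 0`, `s ∈ ℝ`, `T > s`: (i) for each `τ ∈ (s,T]` the improper integral
`L(τ) = lim_{ε→0⁺} ∫ₛ^{τ-ε} U₀(τ-σ; a) dσ` exists; (ii) the limits are uniformly
bounded by a constant `C < ∞`. -/
theorem improper_integral_free_kernel_exists_and_bounded
    (a s T : ℝ) (ha : 0 < a) (hT : s < T) :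
    ∃ C : ℝ, ∀ τ ∈ Set.Ioc s T, ∃ L : ℂ,
      Tendsto (fun ε : ℝ => ∫ σ in s..(τ - ε), U0 (τ - σ) a)
        (nhdsWithin 0 (Set.Ioi 0)) (nhds L) ∧ ‖L‖ ≤ C := by
  have hac : (a : ℂ) ≠ 0 := by exact_mod_cast ha.ne'
  refine ⟨4 * (T - s) / a ^ 2, ?_⟩
  intro τ hτ
  set b : ℝ := τ - s with hbdef
  have hb0 : 0 < b := sub_pos.2 hτ.1
  have hbT : b ≤ T - s := sub_le_sub_right hτ.2 s
  set E : ℝ → ℂ := Ephase a with hEdef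
  set F : ℝ → ℂ := fun t : ℝ => Ephase a t * (2 * t / a ^ 2) with hFdef
  -- integrability of E on [0, b]
  have hEint : IntervalIntegrable E volume 0 b := by
    refine (intervalIntegrable_const (c := (1:ℂ))).mono_fun
      ((Ephase_measurable a).aestronglyMeasurable.restrict) ?_
    refine Filter.Eventually.of_forall fun t => ?_
    show ‖E t‖ ≤ ‖(1:ℂ)‖
    rw [hEdef, Ephase_norm]
    simp
  -- the limit candidate
  set L : ℂ := F b - 2 / (a:ℂ) ^ 2 * ∫ t in (0:ℝ)..b, E t with hLdef
  refine ⟨L, ?_, ?_⟩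
  · -- the tendsto statement
    -- Step 1: the integrand equals the explicit expression for ε ∈ Ioo 0 b
    have key : ∀ ε ∈ Set.Ioo (0:ℝ) b,
        (∫ σ in s..(τ - ε), U0 (τ - σ) a)
          = F b - F ε - 2 / (a:ℂ) ^ 2 * ((∫ t in (0:ℝ)..b, E t) - ∫ t in (0:ℝ)..ε, E t) := by
      intro ε hε
      have hsub : ∀ {x : ℝ}, x ∈ Set.uIcc ε b → x ≠ 0 := by
        intro x hx
        have h1 : min ε b ≤ x := hx.1
        have : (0:ℝ) < min ε b := lt_min hε.1 hb0
        exact (lt_of_lt_of_le this h1).ne'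
      -- change of variables
      have hcv : (∫ σ in s..(τ - ε), U0 (τ - σ) a) = ∫ t in ε..b, U0 t a := by
        rw [intervalIntegral.integral_comp_sub_left (fun t => U0 t a) τ]
        norm_num [hbdef]
      -- integrability on [ε, b]
      have hP : IntervalIntegrable (fun t => U0 t a) volume ε b := by
        apply ContinuousOn.intervalIntegrable
        exact fun x hx => (U0_continuousAt a (hsub hx)).continuousWithinAt
      have hQ : IntervalIntegrable E volume ε b := by
        apply ContinuousOn.intervalIntegrable
        exact fun x hx => (Ephase_continuousAt a (hsub hx)).continuousWithinAt
      -- fundamental theorem of calculus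
      have hftc : (∫ t in ε..b, (U0 t a + E t * (2 / (a:ℂ) ^ 2))) = F b - F ε := by
        refine intervalIntegral.integral_eq_sub_of_hasDerivAt
          (fun x hx => hasDerivAt_F a ha (hsub hx)) ?_
        exact hP.add (hQ.mul_const _)
      rw [intervalIntegral.integral_add hP (hQ.mul_const _)] at hftc
      have hEsplit : (∫ t in ε..b, E t)
          = (∫ t in (0:ℝ)..b, E t) - ∫ t in (0:ℝ)..ε, E t := by
        have h1 : IntervalIntegrable E volume 0 ε :=
          hEint.mono_set (by
            rw [Set.uIcc_of_le hε.1.le, Set.uIcc_of_le hb0.le]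
            exact Set.Icc_subset_Icc le_rfl hε.2.le)
        rw [eq_sub_iff_add_eq, add_comm]
        exact intervalIntegral.integral_add_adjacent_intervals h1
          (hEint.mono_set (by
            rw [Set.uIcc_of_le hε.2.le, Set.uIcc_of_le hb0.le]
            exact Set.Icc_subset_Icc hε.1.le le_rfl))
      have hEc : (∫ t in ε..b, E t * (2 / (a:ℂ) ^ 2))
          = 2 / (a:ℂ) ^ 2 * ∫ t in ε..b, E t := by
        rw [intervalIntegral.integral_mul_const]
        ring
      rw [hcv, ← hftc]
      rw [hEc, hEsplit]
      ring
    -- Step 2: the explicit expression tends to L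
    have hmem : Set.Ioo (0:ℝ) b ∈ nhdsWithin 0 (Set.Ioi 0) := by
      rw [mem_nhdsWithin]
      exact ⟨Set.Iio b, isOpen_Iio, hb0, fun x hx => ⟨hx.2, hx.1⟩⟩
    have hcoef : ∀ t : ℝ, ‖(2 * (t:ℂ) / (a:ℂ) ^ 2)‖ = 2 * |t| / a ^ 2 := by
      intro t
      rw [norm_div, norm_mul, norm_pow, Complex.norm_real, Complex.norm_real,
        Real.norm_eq_abs, Real.norm_eq_abs, abs_of_pos ha]
      norm_num
    have hFnorm : ∀ t : ℝ, ‖F t‖ = 2 * |t| / a ^ 2 := by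
      intro t
      have h : ‖F t‖ = ‖Ephase a t‖ * ‖(2 * (t:ℂ) / (a:ℂ) ^ 2)‖ := by
        rw [hFdef]; push_cast; rw [norm_mul]
      rw [h, Ephase_norm, one_mul, hcoef]
    have hFtend : Tendsto F (nhdsWithin 0 (Set.Ioi 0)) (nhds 0) := by
      have hg : Tendsto (fun t : ℝ => 2 * |t| / a ^ 2) (nhdsWithin 0 (Set.Ioi 0)) (nhds 0) := by
        have : Tendsto (fun t : ℝ => 2 * |t| / a ^ 2) (nhds 0) (nhds (2 * |(0:ℝ)| / a ^ 2)) :=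
          ((continuous_const.mul continuous_abs).div_const _).tendsto 0
        simpa using this.mono_left nhdsWithin_le_nhds
      exact squeeze_zero_norm (fun t => le_of_eq (hFnorm t)) hg
    have hItend : Tendsto (fun ε : ℝ => ∫ t in (0:ℝ)..ε, E t)
        (nhdsWithin 0 (Set.Ioi 0)) (nhds 0) := by
      have hb : ∀ᶠ ε in nhdsWithin 0 (Set.Ioi 0), ‖∫ t in (0:ℝ)..ε, E t‖ ≤ |ε| := by
        refine Filter.Eventually.of_forall fun ε => ?_
        have := intervalIntegral.norm_integral_le_of_norm_le_const
          (a := 0) (b := ε) (C := 1) (f := E) (fun x _ => le_of_eq (Ephase_norm a x))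
        simpa using this
      have hg : Tendsto (fun ε : ℝ => |ε|) (nhdsWithin 0 (Set.Ioi 0)) (nhds 0) :=
        (continuous_abs.tendsto' 0 0 abs_zero).mono_left nhdsWithin_le_nhds
      exact squeeze_zero_norm' hb hg
    have hGtend : Tendsto
        (fun ε : ℝ => F b - F ε - 2 / (a:ℂ) ^ 2 * ((∫ t in (0:ℝ)..b, E t) - ∫ t in (0:ℝ)..ε, E t))
        (nhdsWithin 0 (Set.Ioi 0)) (nhds L) := by
      have : Tendsto
          (fun ε : ℝ => F b - F ε - 2 / (a:ℂ) ^ 2 * ((∫ t in (0:ℝ)..b, E t) - ∫ t in (0:ℝ)..ε, E t))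
          (nhdsWithin 0 (Set.Ioi 0))
          (nhds (F b - 0 - 2 / (a:ℂ) ^ 2 * ((∫ t in (0:ℝ)..b, E t) - 0))) :=
        (tendsto_const_nhds.sub hFtend).sub
          (tendsto_const_nhds.mul (tendsto_const_nhds.sub hItend))
      simpa [hLdef] using this
    refine hGtend.congr' ?_
    filter_upwards [hmem] with ε hε
    exact (key ε hε).symm
  · -- the bound
    have hcoef : ∀ t : ℝ, ‖(2 * (t:ℂ) / (a:ℂ) ^ 2)‖ = 2 * |t| / a ^ 2 := by
      intro t
      rw [norm_div, norm_mul, norm_pow, Complex.norm_real, Complex.norm_real,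
        Real.norm_eq_abs, Real.norm_eq_abs, abs_of_pos ha]
      norm_num
    have h1 : ‖F b‖ ≤ 2 * b / a ^ 2 := by
      have h : ‖F b‖ = ‖Ephase a b‖ * ‖(2 * (b:ℂ) / (a:ℂ) ^ 2)‖ := by
        rw [hFdef]; push_cast; rw [norm_mul]
      rw [h, Ephase_norm, one_mul, hcoef, abs_of_nonneg hb0.le]
    have h2 : ‖(∫ t in (0:ℝ)..b, E t)‖ ≤ b := by
      have := intervalIntegral.norm_integral_le_of_norm_le_const
        (a := 0) (b := b) (C := 1) (f := E) (fun x _ => le_of_eq (Ephase_norm a x))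
      rw [sub_zero, one_mul, abs_of_nonneg hb0.le] at this
      exact this
    have h3 : ‖(2 / (a:ℂ) ^ 2 : ℂ)‖ = 2 / a ^ 2 := by
      rw [norm_div, norm_pow, Complex.norm_real, Real.norm_eq_abs, abs_of_pos ha]
      norm_num
    calc ‖L‖ ≤ ‖F b‖ + ‖(2 / (a:ℂ) ^ 2 : ℂ) * (∫ t in (0:ℝ)..b, E t)‖ := norm_sub_le _ _
      _ = ‖F b‖ + ‖(2 / (a:ℂ) ^ 2 : ℂ)‖ * ‖(∫ t in (0:ℝ)..b, E t)‖ := by simp only [norm_mul]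
      _ ≤ 2 * b / a ^ 2 + 2 / a ^ 2 * b := by
          refine add_le_add h1 ?_
          rw [h3]
          exact mul_le_mul_of_nonneg_left h2 (by positivity)
      _ = 4 * b / a ^ 2 := by ring
      _ ≤ 4 * (T - s) / a ^ 2 := by
          apply div_le_div_of_nonneg_right ?_ (by positivity)
          linarith
end

section
/- The modified Bessel function K₀(r) := ∫₀^∞ e^{−r cosh θ} dθ satisfies K₀(r) + log(r/2) + γ → 0 as r → 0⁺, where γ is the Euler–Mascheroni constant. Equivalently, K₀(r) = −log(r/2) − γ + o(1) as r → 0⁺. -/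
open MeasureTheory Real Filter

/-- The modified Bessel function of the second kind of order `0`:
`K₀(r) = ∫₀^∞ e^{-r cosh θ} dθ`. -/
noncomputable def besselK0 (r : ℝ) : ℝ :=
  ∫ θ in Set.Ioi (0 : ℝ), Real.exp (-r * Real.cosh θ)

namespace BesselK0Aux
open Set



/-- `Γ'(1) = -γ` as an integral. -/
lemma integral_log_mul_exp_neg :
    ∫ t in Set.Ioi (0:ℝ), Real.log t * Real.exp (-t) = -Real.eulerMascheroniConstant := by
  have h1 := Complex.hasDerivAt_GammaIntegral (s := 1) (by norm_num)
  have hint : (∫ t : ℝ in Set.Ioi 0, (t:ℂ) ^ ((1:ℂ) - 1) * ((Real.log t : ℂ) * (Real.exp (-t) : ℂ)))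
      = (((∫ t in Set.Ioi (0:ℝ), Real.log t * Real.exp (-t) : ℝ)) : ℂ) := by
    rw [show (((∫ t in Set.Ioi (0:ℝ), Real.log t * Real.exp (-t) : ℝ)) : ℂ)
        = ∫ t in Set.Ioi (0:ℝ), ((Real.log t * Real.exp (-t) : ℝ) : ℂ) from (integral_ofReal).symm]
    refine setIntegral_congr_fun measurableSet_Ioi fun t ht => ?_
    push_cast
    simp
  rw [hint] at h1
  have h2 : HasDerivAt Complex.Gamma
      ((∫ t in Set.Ioi (0:ℝ), Real.log t * Real.exp (-t) : ℝ) : ℂ) 1 := by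
    refine HasDerivAt.congr_of_eventuallyEq h1 ?_
    have ho : IsOpen {s : ℂ | 0 < s.re} := isOpen_lt continuous_const Complex.continuous_re
    filter_upwards [ho.mem_nhds (by norm_num)] with s hs
    exact Complex.Gamma_eq_integral hs
  have h3 := h2.comp_ofReal
  have h4 : HasDerivAt (fun x : ℝ => Complex.Gamma x)
      ((- Real.eulerMascheroniConstant : ℝ) : ℂ) 1 := by
    have := Real.hasDerivAt_Gamma_one.ofReal_comp
    refine HasDerivAt.congr_of_eventuallyEq this (Filter.Eventually.of_forall fun x => ?_)
    exact (Complex.Gamma_ofReal x)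
  exact_mod_cast h3.unique h4

noncomputable def gg (t : ℝ) : ℝ := Real.log t * Real.exp (-t)
noncomputable def phi (t : ℝ) : ℝ := (1 - Real.exp (-t)) / t

lemma neg_log_le (t : ℝ) (ht : 0 < t) : -Real.log t ≤ 2 * t ^ (-(1/2) : ℝ) := by
  have h1 : Real.log t = 2 * Real.log (t ^ ((1:ℝ)/2)) := by
    rw [Real.log_rpow ht]; ring
  have h2 : -Real.log (t ^ ((1:ℝ)/2)) ≤ (t ^ ((1:ℝ)/2))⁻¹ := by
    have hp : 0 < t ^ ((1:ℝ)/2) := Real.rpow_pos_of_pos ht _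
    have := Real.log_le_sub_one_of_pos (x := (t ^ ((1:ℝ)/2))⁻¹) (by positivity)
    rw [Real.log_inv] at this
    linarith [this]
  have h3 : (t ^ ((1:ℝ)/2))⁻¹ = t ^ (-(1/2) : ℝ) := by
    rw [← Real.rpow_neg ht.le]
  calc -Real.log t = 2 * (-Real.log (t ^ ((1:ℝ)/2))) := by rw [h1]; ring
    _ ≤ 2 * (t ^ ((1:ℝ)/2))⁻¹ := by linarith [h2]
    _ = 2 * t ^ (-(1/2) : ℝ) := by rw [h3]

lemma abs_gg_le {t : ℝ} (ht0 : 0 < t) (ht1 : t ≤ 1) : |gg t| ≤ 2 * t ^ (-(1/2) : ℝ) := by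
  have hlog : Real.log t ≤ 0 := Real.log_nonpos ht0.le ht1
  have : |gg t| ≤ -Real.log t := by
    unfold gg
    rw [abs_mul, abs_of_nonpos hlog, Real.abs_exp]
    nlinarith [Real.exp_le_one_iff.mpr (neg_nonpos.mpr ht0.le), Real.exp_pos (-t),
      neg_nonneg.mpr hlog]
  exact le_trans this (neg_log_le t ht0)

lemma integrableOn_rpow_half {ε : ℝ} (hε : ε ≤ 1) :
    IntegrableOn (fun t : ℝ => 2 * t ^ (-(1/2) : ℝ)) (Set.Ioc 0 ε) := by
  have := (intervalIntegral.intervalIntegrable_rpow' (a := 0) (b := 1)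
    (r := (-(1/2) : ℝ)) (by norm_num))
  rw [intervalIntegrable_iff_integrableOn_Ioc_of_le zero_le_one] at this
  have h2 : IntegrableOn (fun t : ℝ => 2 * t ^ (-(1/2) : ℝ)) (Set.Ioc 0 1) := this.const_mul 2
  exact h2.mono_set (Set.Ioc_subset_Ioc_right hε)

lemma integrableOn_gg_Ioc : IntegrableOn gg (Set.Ioc 0 1) := by
  refine Integrable.mono' (integrableOn_rpow_half le_rfl)
    ((Real.measurable_log.mul (Real.measurable_exp.comp measurable_neg)).aestronglyMeasurable) ?_
  refine (ae_restrict_iff' measurableSet_Ioc).mpr (Filter.Eventually.of_forall fun t ht => ?_)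
  exact abs_gg_le ht.1 ht.2

lemma phi_bounds {t : ℝ} (ht : 0 < t) : 0 ≤ phi t ∧ phi t ≤ 1 := by
  have h1 : Real.exp (-t) ≤ 1 := Real.exp_le_one_iff.mpr (by linarith)
  have h2 : 1 - t ≤ Real.exp (-t) := by linarith [Real.add_one_le_exp (-t)]
  constructor
  · exact div_nonneg (by linarith) ht.le
  · rw [phi, div_le_one ht]; linarith

lemma integrableOn_phi_Ioc : IntegrableOn phi (Set.Ioc 0 1) := by
  have hc : IntegrableOn (fun _ : ℝ => (1:ℝ)) (Set.Ioc 0 1) :=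
    (integrableOn_const_iff (C := (1:ℝ))).mpr (Or.inr (by simp))
  refine Integrable.mono' hc
    (((measurable_const.sub (Real.measurable_exp.comp measurable_neg)).div
      measurable_id).aestronglyMeasurable) ?_
  refine (ae_restrict_iff' measurableSet_Ioc).mpr (Filter.Eventually.of_forall fun t ht => ?_)
  have := phi_bounds ht.1
  rw [Real.norm_eq_abs, abs_of_nonneg this.1]; exact this.2

lemma integrableOn_gg_Ioi : IntegrableOn gg (Set.Ioi 1) := by
  have hbig : IntegrableOn (fun x : ℝ => Real.exp (-x) * x ^ ((2:ℝ) - 1)) (Set.Ioi 1) :=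
    (Real.GammaIntegral_convergent (by norm_num : (0:ℝ) < 2)).mono_set
      (Set.Ioi_subset_Ioi zero_le_one)
  refine Integrable.mono' hbig
    ((Real.measurable_log.mul (Real.measurable_exp.comp measurable_neg)).aestronglyMeasurable) ?_
  refine (ae_restrict_iff' measurableSet_Ioi).mpr (Filter.Eventually.of_forall fun t ht => ?_)
  have ht1 : (1:ℝ) < t := ht
  have hlog : 0 ≤ Real.log t := Real.log_nonneg ht1.le
  have hle : Real.log t ≤ t := by
    have := Real.log_le_sub_one_of_pos (by linarith : (0:ℝ) < t); linarith
  rw [Real.norm_eq_abs, gg, abs_mul, abs_of_nonneg hlog, Real.abs_exp]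
  have h2 : t ^ ((2:ℝ) - 1) = t := by norm_num
  rw [h2, mul_comm]
  exact mul_le_mul_of_nonneg_left hle (Real.exp_pos _).le

lemma integrableOn_exp_div_Ioi {a : ℝ} (ha : 1 ≤ a) :
    IntegrableOn (fun t : ℝ => Real.exp (-t) / t) (Set.Ioi a) := by
  have hbig : IntegrableOn (fun x : ℝ => Real.exp (-(1:ℝ) * x)) (Set.Ioi a) :=
    exp_neg_integrableOn_Ioi a one_pos
  refine Integrable.mono' hbig
    (((Real.measurable_exp.comp measurable_neg).div measurable_id).aestronglyMeasurable) ?_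
  refine (ae_restrict_iff' measurableSet_Ioi).mpr (Filter.Eventually.of_forall fun t ht => ?_)
  have ht1 : a < t := ht
  have ht0 : 0 < t := by linarith
  rw [Real.norm_eq_abs, abs_div, Real.abs_exp, abs_of_pos ht0, neg_one_mul]
  rw [div_le_iff₀ ht0]
  nlinarith [Real.exp_pos (-t), ht0, ha]

lemma hasDerivAt_exp_neg (t : ℝ) :
    HasDerivAt (fun t : ℝ => Real.exp (-t)) (-Real.exp (-t)) t := by
  simpa using (hasDerivAt_neg t).exp

/-- Integration by parts on `[ε, 1]`. -/
lemma ibp_eps {ε : ℝ} (hε0 : 0 < ε) (hε1 : ε ≤ 1) :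
    (∫ t in Set.Ioc ε 1, gg t) + (∫ t in Set.Ioc ε 1, phi t)
      = -((1 - Real.exp (-ε)) * Real.log ε) := by
  have hsub : Set.uIcc ε 1 ⊆ {x : ℝ | x ≠ 0} := by
    rw [Set.uIcc_of_le hε1]
    intro x hx
    exact (lt_of_lt_of_le hε0 hx.1).ne'
  have hcg : ContinuousOn gg (Set.uIcc ε 1) :=
    ((Real.continuousOn_log.mono hsub).mul
      ((Real.continuous_exp.comp continuous_neg).continuousOn))
  have hcp : ContinuousOn phi (Set.uIcc ε 1) := by
    refine ContinuousOn.div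
      ((continuous_const.sub (Real.continuous_exp.comp continuous_neg)).continuousOn)
      continuousOn_id (fun x hx => hsub hx)
  have hig : IntervalIntegrable gg volume ε 1 := hcg.intervalIntegrable
  have hip : IntervalIntegrable phi volume ε 1 := hcp.intervalIntegrable
  have hftc : ∫ t in ε..1, (gg t + phi t)
      = (1 - Real.exp (-(1:ℝ))) * Real.log 1 - (1 - Real.exp (-ε)) * Real.log ε := by
    refine intervalIntegral.integral_eq_sub_of_hasDerivAt
      (f := fun t => (1 - Real.exp (-t)) * Real.log t) (fun t ht => ?_) (hig.add hip)
    have ht0 : 0 < t := lt_of_lt_of_le hε0 (Set.uIcc_of_le hε1 ▸ ht).1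
    have h1 : HasDerivAt (fun t : ℝ => 1 - Real.exp (-t)) (Real.exp (-t)) t := by
      simpa using (hasDerivAt_exp_neg t).const_sub 1
    have h2 := h1.mul (Real.hasDerivAt_log ht0.ne')
    refine h2.congr_deriv ?_
    unfold gg phi
    rw [div_eq_mul_inv]
    ring
  rw [intervalIntegral.integral_add hig hip] at hftc
  rw [intervalIntegral.integral_of_le hε1, intervalIntegral.integral_of_le hε1] at hftc
  simp at hftc
  linarith

lemma split_Ioc {h : ℝ → ℝ} (hI : IntegrableOn h (Set.Ioc 0 1)) {ε : ℝ}
    (hε0 : 0 < ε) (hε1 : ε ≤ 1) :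
    ∫ t in Set.Ioc (0:ℝ) 1, h t = (∫ t in Set.Ioc 0 ε, h t) + ∫ t in Set.Ioc ε 1, h t := by
  rw [← setIntegral_union (Set.Ioc_disjoint_Ioc_of_le le_rfl) measurableSet_Ioc
    (hI.mono_set (Set.Ioc_subset_Ioc_right hε1)) (hI.mono_set (Set.Ioc_subset_Ioc_left hε0.le)),
    Set.Ioc_union_Ioc_eq_Ioc hε0.le hε1]

lemma gg_small {ε : ℝ} (hε0 : 0 < ε) (hε1 : ε ≤ 1) :
    |∫ t in Set.Ioc (0:ℝ) ε, gg t| ≤ 4 * ε ^ ((1:ℝ)/2) := by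
  have h1 : |∫ t in Set.Ioc (0:ℝ) ε, gg t| ≤ ∫ t in Set.Ioc (0:ℝ) ε, |gg t| := by
    simpa [Real.norm_eq_abs] using
      norm_integral_le_integral_norm (μ := volume.restrict (Set.Ioc (0:ℝ) ε)) gg
  have h2 : ∫ t in Set.Ioc (0:ℝ) ε, |gg t| ≤ ∫ t in Set.Ioc (0:ℝ) ε, 2 * t ^ (-(1/2) : ℝ) := by
    refine setIntegral_mono_on ((integrableOn_gg_Ioc.mono_set (Set.Ioc_subset_Ioc_right hε1)).abs)
      (integrableOn_rpow_half hε1) measurableSet_Ioc (fun t ht => ?_)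
    exact abs_gg_le ht.1 (le_trans ht.2 hε1)
  have h3 : ∫ t in Set.Ioc (0:ℝ) ε, 2 * t ^ (-(1/2) : ℝ) = 4 * ε ^ ((1:ℝ)/2) := by
    rw [← intervalIntegral.integral_of_le hε0.le, intervalIntegral.integral_const_mul,
      integral_rpow (Or.inl (by norm_num))]
    rw [Real.zero_rpow (by norm_num)]
    norm_num
    ring
  linarith

lemma phi_small {ε : ℝ} (hε0 : 0 < ε) :
    |∫ t in Set.Ioc (0:ℝ) ε, phi t| ≤ ε := by
  have hpt : ∀ t ∈ Set.Ioc (0:ℝ) ε, ‖phi t‖ ≤ (1:ℝ) := by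
    intro t ht
    have := phi_bounds ht.1
    rw [Real.norm_eq_abs, abs_of_nonneg this.1]; exact this.2
  have h := norm_setIntegral_le_of_norm_le_const (C := (1:ℝ)) (s := Set.Ioc (0:ℝ) ε)
    (f := phi) (measure_Ioc_lt_top : volume (Set.Ioc (0:ℝ) ε) < ⊤) hpt
  rw [Real.norm_eq_abs] at h
  calc |∫ t in Set.Ioc (0:ℝ) ε, phi t| ≤ 1 * (volume (Set.Ioc (0:ℝ) ε)).toReal := h
    _ = ε := by rw [one_mul, Real.volume_Ioc, ENNReal.toReal_ofReal (by linarith : (0:ℝ) ≤ ε - 0)]; ring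

/-- key constant identity: `γ = ∫_{(0,1]} (1-e^{-t})/t dt - ∫_{(1,∞)} e^{-t}/t dt`. -/
lemma gamma_eq : Real.eulerMascheroniConstant
    = (∫ t in Set.Ioc (0:ℝ) 1, phi t) - ∫ t in Set.Ioi (1:ℝ), Real.exp (-t) / t := by
  -- I_b = J₂
  have hIb : ∫ t in Set.Ioi (1:ℝ), gg t = ∫ t in Set.Ioi (1:ℝ), Real.exp (-t) / t := by
    have key : ∫ t in Set.Ioi (1:ℝ), (gg t - Real.exp (-t) / t)
        = 0 - -(Real.exp (-1) * Real.log 1) := by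
      refine integral_Ioi_of_hasDerivAt_of_tendsto' (f := fun t => -(Real.exp (-t) * Real.log t))
        (fun t ht => ?_) (integrableOn_gg_Ioi.sub (integrableOn_exp_div_Ioi le_rfl)) ?_
      · have ht0 : 0 < t := lt_of_lt_of_le one_pos ht
        have h2 := ((hasDerivAt_exp_neg t).mul (Real.hasDerivAt_log ht0.ne')).neg
        refine h2.congr_deriv ?_
        unfold gg
        rw [div_eq_mul_inv]
        ring
      · have h : Tendsto (fun t : ℝ => t ^ 1 * Real.exp (-t)) atTop (nhds 0) :=
          Real.tendsto_pow_mul_exp_neg_atTop_nhds_zero 1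
        rw [show (0:ℝ) = -0 by ring]
        refine Tendsto.neg (squeeze_zero_norm' ?_ (by simpa using h))
        filter_upwards [eventually_ge_atTop (1:ℝ)] with t ht
        have hlog : 0 ≤ Real.log t := Real.log_nonneg ht
        have hle : Real.log t ≤ t := by
          have := Real.log_le_sub_one_of_pos (by linarith : (0:ℝ) < t); linarith
        rw [Real.norm_eq_abs, abs_mul, Real.abs_exp, abs_of_nonneg hlog]
        calc Real.exp (-t) * Real.log t ≤ Real.exp (-t) * t :=
              mul_le_mul_of_nonneg_left hle (Real.exp_pos _).le
          _ = t * Real.exp (-t) := by ring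
    rw [integral_sub integrableOn_gg_Ioi (integrableOn_exp_div_Ioi le_rfl)] at key
    simp at key
    linarith
  -- I_a = -J₁ via limits
  have hIa : (∫ t in Set.Ioc (0:ℝ) 1, gg t) + (∫ t in Set.Ioc (0:ℝ) 1, phi t) = 0 := by
    set L := ∫ t in Set.Ioc (0:ℝ) 1, gg t with hL
    set J := ∫ t in Set.Ioc (0:ℝ) 1, phi t with hJ
    have T1 : Tendsto (fun ε => ∫ t in Set.Ioc ε 1, gg t) (nhdsWithin 0 (Set.Ioi 0)) (nhds L) := by
      have hz : Tendsto (fun ε : ℝ => ∫ t in Set.Ioc (0:ℝ) ε, gg t)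
          (nhdsWithin 0 (Set.Ioi 0)) (nhds 0) := by
        refine squeeze_zero_norm' (a := fun ε => 4 * ε ^ ((1:ℝ)/2)) ?_ ?_
        · filter_upwards [Ioo_mem_nhdsGT_of_mem (by norm_num : (0:ℝ) ∈ Set.Ico (0:ℝ) 1)]
            with ε hε
          exact gg_small hε.1 hε.2.le
        · have hc : Tendsto (fun ε : ℝ => 4 * ε ^ ((1:ℝ)/2)) (nhds 0)
              (nhds (4 * (0:ℝ) ^ ((1:ℝ)/2))) :=
            ((Real.continuousAt_rpow_const 0 ((1:ℝ)/2) (Or.inr (by norm_num))).const_smul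
              (4:ℝ)).tendsto
          have : (4:ℝ) * (0:ℝ) ^ ((1:ℝ)/2) = 0 := by
            rw [Real.zero_rpow (by norm_num)]; ring
          simpa [this] using hc.mono_left nhdsWithin_le_nhds
      have heq : ∀ᶠ ε in nhdsWithin (0:ℝ) (Set.Ioi 0),
          L - ∫ t in Set.Ioc (0:ℝ) ε, gg t = ∫ t in Set.Ioc ε 1, gg t := by
        filter_upwards [Ioo_mem_nhdsGT_of_mem (by norm_num : (0:ℝ) ∈ Set.Ico (0:ℝ) 1)]
          with ε hε
        rw [hL, split_Ioc integrableOn_gg_Ioc hε.1 hε.2.le]; ring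
      simpa using (tendsto_const_nhds.sub hz).congr' heq
    have T2 : Tendsto (fun ε => ∫ t in Set.Ioc ε 1, phi t) (nhdsWithin 0 (Set.Ioi 0)) (nhds J) := by
      have hz : Tendsto (fun ε : ℝ => ∫ t in Set.Ioc (0:ℝ) ε, phi t)
          (nhdsWithin 0 (Set.Ioi 0)) (nhds 0) := by
        refine squeeze_zero_norm' (a := fun ε => ε) ?_ ?_
        · filter_upwards [self_mem_nhdsWithin] with ε hε
          exact phi_small hε
        · exact (continuous_id.tendsto 0).mono_left nhdsWithin_le_nhds
      have heq : ∀ᶠ ε in nhdsWithin (0:ℝ) (Set.Ioi 0),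
          J - ∫ t in Set.Ioc (0:ℝ) ε, phi t = ∫ t in Set.Ioc ε 1, phi t := by
        filter_upwards [Ioo_mem_nhdsGT_of_mem (by norm_num : (0:ℝ) ∈ Set.Ico (0:ℝ) 1)]
          with ε hε
        rw [hJ, split_Ioc integrableOn_phi_Ioc hε.1 hε.2.le]; ring
      simpa using (tendsto_const_nhds.sub hz).congr' heq
    have T3 : Tendsto (fun ε : ℝ => -((1 - Real.exp (-ε)) * Real.log ε))
        (nhdsWithin 0 (Set.Ioi 0)) (nhds 0) := by
      have h3 := squeeze_zero_norm' (a := fun ε => |Real.log ε * ε ^ (1:ℝ)|)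
        (f := fun ε : ℝ => (1 - Real.exp (-ε)) * Real.log ε) (t₀ := nhdsWithin 0 (Set.Ioi 0)) ?_ ?_
      · simpa using h3.neg
      · filter_upwards [Ioo_mem_nhdsGT_of_mem (by norm_num : (0:ℝ) ∈ Set.Ico (0:ℝ) 1)]
          with ε hε
        have h1 : Real.exp (-ε) ≤ 1 := Real.exp_le_one_iff.mpr (by linarith [hε.1])
        have h2 : 1 - ε ≤ Real.exp (-ε) := by linarith [Real.add_one_le_exp (-ε)]
        rw [Real.norm_eq_abs, abs_mul]
        calc |1 - Real.exp (-ε)| * |Real.log ε| ≤ ε * |Real.log ε| := by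
              refine mul_le_mul_of_nonneg_right ?_ (abs_nonneg _)
              rw [abs_of_nonneg (by linarith)]; linarith
          _ = |Real.log ε * ε ^ (1:ℝ)| := by
              rw [abs_mul, Real.rpow_one, abs_of_pos hε.1]; ring
      · have := (tendsto_log_mul_rpow_nhdsGT_zero one_pos).abs
        simpa using this
    have := tendsto_nhds_unique ((T1.add T2).congr'
      (by filter_upwards [Ioo_mem_nhdsGT_of_mem (by norm_num : (0:ℝ) ∈ Set.Ico (0:ℝ) 1)]
            with ε hε
          exact ibp_eps hε.1 hε.2.le)) T3
    linarith [this]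
  have htot : (∫ t in Set.Ioc (0:ℝ) 1, gg t) + ∫ t in Set.Ioi (1:ℝ), gg t
      = -Real.eulerMascheroniConstant := by
    rw [← setIntegral_union (Set.Ioc_disjoint_Ioi le_rfl) measurableSet_Ioi
      integrableOn_gg_Ioc integrableOn_gg_Ioi, Set.Ioc_union_Ioi_eq_Ioi zero_le_one]
    exact integral_log_mul_exp_neg
  rw [hIb] at htot
  linarith




lemma image_mul_exp {x : ℝ} (hx : 0 < x) :
    (fun θ : ℝ => x * Real.exp θ) '' (Set.Ioi 0) = Set.Ioi x := by
  ext u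
  constructor
  · rintro ⟨θ, hθ, rfl⟩
    have h1 : 1 < Real.exp θ := by
      have : (0:ℝ) < θ := hθ
      simpa using Real.exp_lt_exp.mpr this
    show x < x * Real.exp θ
    nlinarith
  · intro hu
    have hux : x < u := hu
    refine ⟨Real.log (u / x), ?_, ?_⟩
    · exact Real.log_pos ((one_lt_div hx).mpr hux)
    · show x * Real.exp (Real.log (u / x)) = u
      rw [Real.exp_log (div_pos (by linarith) hx)]
      field_simp

lemma E1_eq {x : ℝ} (hx : 0 < x) :
    ∫ θ in Set.Ioi (0:ℝ), Real.exp (-(x * Real.exp θ))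
      = ∫ u in Set.Ioi x, Real.exp (-u) / u := by
  have hderiv : ∀ θ ∈ Set.Ioi (0:ℝ),
      HasDerivWithinAt (fun θ => x * Real.exp θ) (x * Real.exp θ) (Set.Ioi 0) θ :=
    fun θ _ => ((Real.hasDerivAt_exp θ).const_mul x).hasDerivWithinAt
  have hinj : Set.InjOn (fun θ : ℝ => x * Real.exp θ) (Set.Ioi 0) :=
    fun a _ b _ h => Real.exp_injective (mul_left_cancel₀ hx.ne' h)
  have himg := integral_image_eq_integral_abs_deriv_smul measurableSet_Ioi hderiv hinj
    (fun u => Real.exp (-u) / u)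
  rw [image_mul_exp hx] at himg
  rw [himg]
  refine setIntegral_congr_fun measurableSet_Ioi fun θ hθ => ?_
  have h1 : 0 < x * Real.exp θ := by positivity
  rw [smul_eq_mul, abs_of_pos h1]
  field_simp



lemma integrableOn_exp_mul_exp {x : ℝ} (hx : 0 < x) :
    IntegrableOn (fun θ : ℝ => Real.exp (-(x * Real.exp θ))) (Set.Ioi 0) := by
  have hbig : IntegrableOn (fun θ : ℝ => Real.exp (-x) * Real.exp (-x * θ)) (Set.Ioi 0) :=
    (exp_neg_integrableOn_Ioi 0 hx).const_mul _
  refine Integrable.mono' hbig (Continuous.aestronglyMeasurable (by continuity)) ?_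
  refine (ae_restrict_iff' measurableSet_Ioi).mpr (Filter.Eventually.of_forall fun θ _ => ?_)
  rw [Real.norm_eq_abs, Real.abs_exp, ← Real.exp_add]
  refine Real.exp_le_exp.mpr ?_
  nlinarith [Real.add_one_le_exp θ, hx.le]

lemma integrableOn_besselK0 {r : ℝ} (hr : 0 < r) :
    IntegrableOn (fun θ : ℝ => Real.exp (-r * Real.cosh θ)) (Set.Ioi 0) := by
  refine Integrable.mono' (integrableOn_exp_mul_exp (x := r/2) (by linarith))
    (Continuous.aestronglyMeasurable (by continuity)) ?_
  refine (ae_restrict_iff' measurableSet_Ioi).mpr (Filter.Eventually.of_forall fun θ _ => ?_)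
  rw [Real.norm_eq_abs, Real.abs_exp]
  refine Real.exp_le_exp.mpr ?_
  rw [Real.cosh_eq]
  nlinarith [Real.exp_pos (-θ), hr.le]

lemma exp_cosh_split {r θ : ℝ} :
    Real.exp (-r * Real.cosh θ)
      = Real.exp (-(r/2 * Real.exp θ)) * Real.exp (-(r/2 * Real.exp (-θ))) := by
  rw [← Real.exp_add, Real.cosh_eq]
  ring_nf

lemma diff_bound_aux {r : ℝ} (hr : 0 < r) :
    0 ≤ (∫ θ in Set.Ioi (0:ℝ), Real.exp (-(r/2 * Real.exp θ))) - besselK0 r ∧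
    (∫ θ in Set.Ioi (0:ℝ), Real.exp (-(r/2 * Real.exp θ))) - besselK0 r ≤ r/2 := by
  have hE := integrableOn_exp_mul_exp (x := r/2) (by linarith)
  have hK := integrableOn_besselK0 hr
  have hsub : (∫ θ in Set.Ioi (0:ℝ), Real.exp (-(r/2 * Real.exp θ))) - besselK0 r
      = ∫ θ in Set.Ioi (0:ℝ),
          (Real.exp (-(r/2 * Real.exp θ)) - Real.exp (-r * Real.cosh θ)) := by
    rw [besselK0, integral_sub hE hK]
  have hpt : ∀ θ : ℝ, 0 < θ →
      0 ≤ Real.exp (-(r/2 * Real.exp θ)) - Real.exp (-r * Real.cosh θ) ∧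
      Real.exp (-(r/2 * Real.exp θ)) - Real.exp (-r * Real.cosh θ) ≤ r/2 * Real.exp (-θ) := by
    intro θ hθ
    have hA : Real.exp (-(r/2 * Real.exp θ)) ≤ 1 :=
      Real.exp_le_one_iff.mpr (by nlinarith [Real.exp_pos θ, hr.le])
    have hA0 : 0 < Real.exp (-(r/2 * Real.exp θ)) := Real.exp_pos _
    have hB1 : Real.exp (-(r/2 * Real.exp (-θ))) ≤ 1 :=
      Real.exp_le_one_iff.mpr (by nlinarith [Real.exp_pos (-θ), hr.le])
    have hB2 : 1 - Real.exp (-(r/2 * Real.exp (-θ))) ≤ r/2 * Real.exp (-θ) := by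
      nlinarith [Real.add_one_le_exp (-(r/2 * Real.exp (-θ)))]
    rw [exp_cosh_split]
    constructor
    · nlinarith
    · nlinarith
  constructor
  · rw [hsub]
    exact setIntegral_nonneg measurableSet_Ioi fun θ hθ => (hpt θ hθ).1
  · rw [hsub]
    have hbI : IntegrableOn (fun θ : ℝ => r/2 * Real.exp (-θ)) (Set.Ioi 0) := by
      have : IntegrableOn (fun θ : ℝ => Real.exp (-(1:ℝ) * θ)) (Set.Ioi 0) :=
        exp_neg_integrableOn_Ioi 0 one_pos
      have h2 : IntegrableOn (fun θ : ℝ => Real.exp (-θ)) (Set.Ioi 0) := by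
        simpa [neg_one_mul] using this
      exact h2.const_mul _
    have hmono : ∫ θ in Set.Ioi (0:ℝ),
          (Real.exp (-(r/2 * Real.exp θ)) - Real.exp (-r * Real.cosh θ))
        ≤ ∫ θ in Set.Ioi (0:ℝ), r/2 * Real.exp (-θ) := by
      refine setIntegral_mono_on (hE.sub hK) hbI measurableSet_Ioi fun θ hθ => (hpt θ hθ).2
    have hval : ∫ θ in Set.Ioi (0:ℝ), r/2 * Real.exp (-θ) = r/2 := by
      rw [MeasureTheory.integral_const_mul, integral_exp_neg_Ioi_zero, mul_one]
    linarith

lemma E1_est {x : ℝ} (hx0 : 0 < x) (hx1 : x ≤ 1) :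
    |(∫ u in Set.Ioi x, Real.exp (-u) / u) + Real.log x + Real.eulerMascheroniConstant| ≤ x := by
  have hIoc : IntegrableOn (fun u : ℝ => Real.exp (-u) / u) (Set.Ioc x 1) := by
    have hc : ContinuousOn (fun u : ℝ => Real.exp (-u) / u) (Set.Icc x 1) := by
      refine ContinuousOn.div ((Real.continuous_exp.comp continuous_neg).continuousOn)
        continuousOn_id (fun u hu => (lt_of_lt_of_le hx0 hu.1).ne')
    exact (hc.integrableOn_Icc).mono_set Set.Ioc_subset_Icc_self
  have hsplit : ∫ u in Set.Ioi x, Real.exp (-u) / u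
      = (∫ u in Set.Ioc x 1, Real.exp (-u) / u) + ∫ u in Set.Ioi (1:ℝ), Real.exp (-u) / u := by
    rw [← setIntegral_union (Set.Ioc_disjoint_Ioi le_rfl) measurableSet_Ioi hIoc
      (integrableOn_exp_div_Ioi le_rfl), Set.Ioc_union_Ioi_eq_Ioi hx1]
  have hinv : IntegrableOn (fun u : ℝ => u⁻¹) (Set.Ioc x 1) := by
    have hc : ContinuousOn (fun u : ℝ => u⁻¹) (Set.Icc x 1) :=
      ContinuousOn.inv₀ continuousOn_id (fun u hu => (lt_of_lt_of_le hx0 hu.1).ne')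
    exact (hc.integrableOn_Icc).mono_set Set.Ioc_subset_Icc_self
  have hmid : ∫ u in Set.Ioc x 1, Real.exp (-u) / u
      = -Real.log x - ∫ u in Set.Ioc x 1, phi u := by
    have h1 : ∫ u in Set.Ioc x 1, Real.exp (-u) / u
        = ∫ u in Set.Ioc x 1, (u⁻¹ - phi u) := by
      refine setIntegral_congr_fun measurableSet_Ioc fun u hu => ?_
      have hu0 : (0:ℝ) < u := lt_of_lt_of_le hx0 hu.1.le
      unfold phi
      field_simp
      ring
    have h2 : ∫ u in Set.Ioc x 1, (u⁻¹ : ℝ) = -Real.log x := by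
      rw [← intervalIntegral.integral_of_le hx1, integral_inv_of_pos hx0 one_pos,
        one_div, Real.log_inv]
    rw [h1, integral_sub hinv (integrableOn_phi_Ioc.mono_set
      (Set.Ioc_subset_Ioc_left hx0.le)), h2]
  have hphi := split_Ioc integrableOn_phi_Ioc hx0 hx1
  have hkey : (∫ u in Set.Ioi x, Real.exp (-u) / u) + Real.log x + Real.eulerMascheroniConstant
      = ∫ u in Set.Ioc (0:ℝ) x, phi u := by
    rw [hsplit, hmid, gamma_eq]
    linarith [hphi]
  rw [hkey]
  exact phi_small hx0

lemma key_bound {r : ℝ} (hr0 : 0 < r) (hr1 : r ≤ 1) :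
    |besselK0 r + Real.log (r / 2) + Real.eulerMascheroniConstant| ≤ r := by
  have hx0 : 0 < r / 2 := by linarith
  have h1 := diff_bound_aux hr0
  rw [E1_eq hx0] at h1
  have h2 := E1_est hx0 (by linarith)
  set E := ∫ u in Set.Ioi (r/2), Real.exp (-u) / u with hE
  have : besselK0 r + Real.log (r / 2) + Real.eulerMascheroniConstant
      = (besselK0 r - E) + (E + Real.log (r/2) + Real.eulerMascheroniConstant) := by ring
  rw [this]
  calc |(besselK0 r - E) + (E + Real.log (r/2) + Real.eulerMascheroniConstant)|
      ≤ |besselK0 r - E| + |E + Real.log (r/2) + Real.eulerMascheroniConstant| := abs_add_le _ _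
    _ ≤ r/2 + r/2 := by
        refine add_le_add ?_ h2
        rw [abs_sub_comm, abs_of_nonneg h1.1]
        exact h1.2
    _ = r := by ring


end BesselK0Aux

/-- As `r → 0⁺`, `K₀(r) + log(r/2) + γ → 0`, i.e. `K₀(r) = -log(r/2) - γ + o(1)`. -/

theorem besselK0_asymptotics_at_zero :
    Tendsto (fun r : ℝ => besselK0 r + Real.log (r / 2) + Real.eulerMascheroniConstant)
      (nhdsWithin 0 (Set.Ioi 0)) (nhds 0) := by
  refine squeeze_zero_norm' (a := fun r : ℝ => r) ?_
    ((continuous_id.tendsto 0).mono_left nhdsWithin_le_nhds)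
  filter_upwards [Ioo_mem_nhdsGT_of_mem (by norm_num : (0:ℝ) ∈ Set.Ico (0:ℝ) 1)] with r hr
  exact BesselK0Aux.key_bound hr.1 hr.2.le
end

section
/- Let λ > 0 and s > 0. Then both improper limits below exist and lim_{R→∞} ∫_{‖p‖≤R} e^{−i ‖p‖² s} / (‖p‖² + λ) dp = π e^{i λ s} · lim_{R→∞} ∫_{λ s}^{R} e^{−i u} / u du, where the left-hand side is an integral over balls of radius R in ℝ². -/
open MeasureTheory Real Filter Set intervalIntegral

noncomputable section

private def hfun : ℝ → ℂ := fun u => Complex.exp (-Complex.I * u) / (u : ℂ)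
private def vfun : ℝ → ℂ := fun x => Complex.I * Complex.exp (-Complex.I * x)
private def wfun' : ℝ → ℂ := fun x => -(((x : ℂ) ^ 2)⁻¹)

private lemma hasDerivAt_vfun (x : ℝ) :
    HasDerivAt vfun (Complex.exp (-Complex.I * x)) x := by
  have h1 : HasDerivAt (fun z : ℂ => Complex.I * Complex.exp (-Complex.I * z))
      (Complex.I * (Complex.exp (-Complex.I * (x : ℂ)) * (-Complex.I * 1))) (x : ℂ) := by
    exact (((hasDerivAt_id ((x : ℂ))).const_mul (-Complex.I)).cexp).const_mul Complex.I
  have h2 := h1.comp_ofReal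
  convert h2 using 1
  · rfl
  have : Complex.I * Complex.I = -1 := Complex.I_mul_I
  ring_nf
  rw [Complex.I_sq]
  ring

private lemma hasDerivAt_wfun {x : ℝ} (hx : x ≠ 0) :
    HasDerivAt (fun y : ℝ => ((y : ℂ))⁻¹) (wfun' x) x := by
  have h1 : HasDerivAt (fun z : ℂ => z⁻¹) (-(((x : ℂ) ^ 2)⁻¹)) (x : ℂ) :=
    hasDerivAt_inv (by exact_mod_cast hx)
  exact h1.comp_ofReal

end

private lemma integrableOn_tail (a : ℝ) (ha : 0 < a) :
    IntegrableOn (fun x : ℝ => wfun' x * vfun x) (Ioi a) := by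
  have hmeas : Measurable fun x : ℝ => wfun' x * vfun x := by
    unfold wfun' vfun
    fun_prop
  have hint : IntegrableOn (fun x : ℝ => x ^ (-2 : ℝ)) (Ioi a) :=
    integrableOn_Ioi_rpow_of_lt (by norm_num) ha
  refine Integrable.mono hint hmeas.aestronglyMeasurable ?_
  filter_upwards [ae_restrict_mem measurableSet_Ioi] with x hx
  have hx0 : (0 : ℝ) < x := ha.trans hx
  have hnorm : ‖wfun' x * vfun x‖ = (x ^ 2)⁻¹ := by
    unfold wfun' vfun
    rw [norm_mul, norm_neg, norm_inv, norm_mul]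
    have : ‖Complex.exp (-Complex.I * x)‖ = 1 := by
      rw [Complex.norm_exp]
      simp
    rw [this]
    simp only [Complex.norm_I, one_mul, mul_one]
    rw [← Complex.ofReal_pow, Complex.norm_real, Real.norm_eq_abs, abs_of_pos (by positivity)]
  rw [hnorm, Real.norm_eq_abs, abs_of_pos (by positivity : (0:ℝ) < x ^ (-2:ℝ))]
  rw [Real.rpow_neg hx0.le, Real.rpow_two]

private lemma lim_exists (a : ℝ) (ha : 0 < a) :
    ∃ L : ℂ, Tendsto (fun R : ℝ => ∫ u in a..R, Complex.exp (-Complex.I * u) / (u : ℂ))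
      atTop (nhds L) := by
  refine ⟨(0 : ℂ) - (a : ℂ)⁻¹ * vfun a - ∫ x in Ioi a, wfun' x * vfun x, ?_⟩
  have key : ∀ b : ℝ, a ≤ b →
      (∫ u in a..b, Complex.exp (-Complex.I * u) / (u : ℂ)) =
        (b : ℂ)⁻¹ * vfun b - (a : ℂ)⁻¹ * vfun a - ∫ x in a..b, wfun' x * vfun x := by
    intro b hb
    have hsub : uIcc a b ⊆ Ioi (0:ℝ) := by
      rw [uIcc_of_le hb]
      exact fun x hx => lt_of_lt_of_le ha hx.1
    have h1 : ∀ x ∈ uIcc a b, HasDerivAt (fun y : ℝ => ((y : ℂ))⁻¹) (wfun' x) x :=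
      fun x hx => hasDerivAt_wfun (ne_of_gt (hsub hx))
    have h2 : ∀ x ∈ uIcc a b, HasDerivAt vfun (Complex.exp (-Complex.I * x)) x :=
      fun x _ => hasDerivAt_vfun x
    have h3 : IntervalIntegrable wfun' volume a b := by
      apply ContinuousOn.intervalIntegrable
      apply ContinuousOn.neg
      apply ContinuousOn.inv₀
      · fun_prop
      · intro x hx
        have : (0:ℝ) < x := hsub hx
        exact pow_ne_zero 2 (Complex.ofReal_ne_zero.mpr this.ne')
    have h4 : IntervalIntegrable (fun x : ℝ => Complex.exp (-Complex.I * x)) volume a b := by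
      apply Continuous.intervalIntegrable; fun_prop
    have := intervalIntegral.integral_mul_deriv_eq_deriv_mul h1 h2 h3 h4
    simpa only [div_eq_inv_mul] using this
  have h0 : Tendsto (fun b : ℝ => (b : ℂ)⁻¹ * vfun b) atTop (nhds 0) := by
    have hb : Tendsto (fun b : ℝ => ((b : ℂ))⁻¹) atTop (nhds 0) := by
      have : Tendsto (fun b : ℝ => ((b⁻¹ : ℝ) : ℂ)) atTop (nhds ((0:ℝ):ℂ)) :=
        (Complex.continuous_ofReal.tendsto 0).comp tendsto_inv_atTop_zero
      simpa using this
    refine hb.zero_mul_isBoundedUnder_le ?_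
    refine isBoundedUnder_of ⟨1, fun b => ?_⟩
    simp only [Function.comp_apply, vfun, norm_mul]
    rw [Complex.norm_I, Complex.norm_exp]
    simp
  have h5 : Tendsto (fun b : ℝ => ∫ x in a..b, wfun' x * vfun x) atTop
      (nhds (∫ x in Ioi a, wfun' x * vfun x)) :=
    intervalIntegral_tendsto_integral_Ioi a (integrableOn_tail a ha) tendsto_id
  have := (h0.sub_const ((a : ℂ)⁻¹ * vfun a)).sub h5
  refine Tendsto.congr' ?_ this
  filter_upwards [eventually_ge_atTop a] with b hb
  exact (key b hb).symm

private noncomputable def ffun (lam s : ℝ) : ℝ → ℂ :=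
  fun y => Complex.exp (-Complex.I * (y : ℂ) ^ 2 * s) / ((y ^ 2 + lam : ℝ) : ℂ)

private lemma radial_step (lam s : ℝ) {R : ℝ} (hR : 0 < R) :
    (∫ p in Metric.ball (0 : EuclideanSpace ℝ (Fin 2)) R,
        Complex.exp (-Complex.I * ‖p‖ ^ 2 * s) / ((‖p‖ ^ 2 + lam : ℝ) : ℂ)) =
      (2 : ℝ) * Real.pi * ∫ y in (0 : ℝ)..R, y • ffun lam s y := by
  have h1 : (∫ p in Metric.ball (0 : EuclideanSpace ℝ (Fin 2)) R,
      Complex.exp (-Complex.I * ‖p‖ ^ 2 * s) / ((‖p‖ ^ 2 + lam : ℝ) : ℂ)) =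
      ∫ p : EuclideanSpace ℝ (Fin 2), (Iio R).indicator (ffun lam s) ‖p‖ := by
    rw [← MeasureTheory.integral_indicator measurableSet_ball]
    congr 1
    funext p
    by_cases hp : p ∈ Metric.ball (0 : EuclideanSpace ℝ (Fin 2)) R
    · rw [indicator_of_mem hp, indicator_of_mem (by simpa [mem_ball_zero_iff] using hp)]
      rfl
    · rw [indicator_of_notMem hp,
        indicator_of_notMem (by simpa [mem_ball_zero_iff] using hp)]
  rw [h1, integral_fun_norm_addHaar volume ((Iio R).indicator (ffun lam s))]
  have hdim : Module.finrank ℝ (EuclideanSpace ℝ (Fin 2)) = 2 := by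
    simp [finrank_euclideanSpace]
  rw [hdim]
  have hvol : (volume (Metric.ball (0 : EuclideanSpace ℝ (Fin 2)) 1)).toReal = Real.pi := by
    rw [EuclideanSpace.volume_ball]
    simp only [Fintype.card_fin]
    norm_num [Real.Gamma_two, Real.sq_sqrt Real.pi_nonneg,
      ENNReal.toReal_ofReal Real.pi_nonneg]
  rw [measureReal_def, hvol]
  have h2 : (∫ y in Ioi (0:ℝ), y ^ (2 - 1) • (Iio R).indicator (ffun lam s) y) =
      ∫ y in (0:ℝ)..R, y • ffun lam s y := by
    have : ∀ y : ℝ, y ^ (2 - 1) • (Iio R).indicator (ffun lam s) y =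
        (Iio R).indicator (fun y => y • ffun lam s y) y := by
      intro y
      by_cases hy : y ∈ Iio R
      · rw [indicator_of_mem hy, indicator_of_mem hy]; simp
      · rw [indicator_of_notMem hy, indicator_of_notMem hy]; simp
    simp only [this]
    rw [setIntegral_indicator measurableSet_Iio, Set.Ioi_inter_Iio,
      ← integral_Ioc_eq_integral_Ioo, ← intervalIntegral.integral_of_le hR.le]
  rw [h2]
  simp only [two_smul, Complex.real_smul]
  push_cast
  ring

private lemma subst_step (lam s : ℝ) (hlam : 0 < lam) (hs : 0 < s) {R : ℝ} (hR : 0 < R) :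
    (∫ u in (lam * s)..((R ^ 2 + lam) * s), hfun u) =
      (2 * Complex.exp (-(Complex.I * lam * s))) * ∫ y in (0:ℝ)..R, y • ffun lam s y := by
  set φ : ℝ → ℝ := fun y => (y ^ 2 + lam) * s with hφ
  have hderiv : ∀ y ∈ uIcc (0:ℝ) R, HasDerivAt φ (2 * y * s) y := by
    intro y _
    have : HasDerivAt (fun y : ℝ => (y ^ 2 + lam) * s) (((2:ℕ) * y ^ 1) * s) y :=
      (((hasDerivAt_pow 2 y).add_const lam).mul_const s)
    simpa using this
  have hcont : ContinuousOn (fun y : ℝ => 2 * y * s) (uIcc (0:ℝ) R) := by fun_prop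
  have hg : ContinuousOn hfun (φ '' uIcc (0:ℝ) R) := by
    have hpos : ∀ u ∈ φ '' uIcc (0:ℝ) R, (0:ℝ) < u := by
      rintro u ⟨y, _, rfl⟩
      have : 0 ≤ y ^ 2 := sq_nonneg y
      positivity
    unfold hfun
    apply ContinuousOn.div
    · fun_prop
    · fun_prop
    · intro u hu
      exact Complex.ofReal_ne_zero.mpr (hpos u hu).ne'
  have key := intervalIntegral.integral_comp_smul_deriv' hderiv hcont hg
  have h0 : φ 0 = lam * s := by simp [hφ]
  have h: φ R = (R ^ 2 + lam) * s := rfl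
  rw [h0] at key
  rw [← key, ← intervalIntegral.integral_const_mul]
  apply intervalIntegral.integral_congr
  intro y _
  show (2 * y * s) • hfun (φ y) =
    2 * Complex.exp (-(Complex.I * lam * s)) * (y • ffun lam s y)
  unfold hfun ffun
  have hden : ((y:ℂ) ^ 2 + lam) ≠ 0 := by
    have : (0:ℝ) < y ^ 2 + lam := by positivity
    exact_mod_cast Complex.ofReal_ne_zero.mpr this.ne'
  have hsne : (s : ℂ) ≠ 0 := Complex.ofReal_ne_zero.mpr hs.ne'
  rw [Complex.real_smul, Complex.real_smul]
  simp only [hφ]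
  push_cast
  rw [show -Complex.I * ((↑y ^ 2 + ↑lam) * ↑s) =
    -Complex.I * (y:ℂ) ^ 2 * s + -(Complex.I * lam * s) from by ring, Complex.exp_add]
  field_simp


/-- For `λ > 0` and `s > 0`, both improper limits exist and
`lim_{R→∞} ∫_{‖p‖≤R} e^{-i‖p‖²s}/(‖p‖²+λ) dp = π e^{iλs} lim_{R→∞} ∫_{λs}^R e^{-iu}/u du`. -/
theorem fresnel_green_integral_eq (lam s : ℝ) (hlam : 0 < lam) (hs : 0 < s) :
    ∃ L : ℂ,
      Tendsto (fun R : ℝ => ∫ u in (lam * s)..R, Complex.exp (-Complex.I * u) / (u : ℂ))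
        atTop (nhds L) ∧
      Tendsto
        (fun R : ℝ => ∫ p in Metric.ball (0 : EuclideanSpace ℝ (Fin 2)) R,
          Complex.exp (-Complex.I * ‖p‖ ^ 2 * s) / ((‖p‖ ^ 2 + lam : ℝ) : ℂ))
        atTop
        (nhds ((Real.pi : ℂ) * Complex.exp (Complex.I * lam * s) * L)) := by
  obtain ⟨L, hL⟩ := lim_exists (lam * s) (by positivity)
  refine ⟨L, hL, ?_⟩
  have hφ : Tendsto (fun R : ℝ => (R ^ 2 + lam) * s) atTop atTop :=
    (tendsto_atTop_add_const_right _ lam (tendsto_pow_atTop two_ne_zero)).atTop_mul_const hs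
  have h2 := (hL.comp hφ).const_mul ((Real.pi : ℂ) * Complex.exp (Complex.I * lam * s))
  refine Tendsto.congr' ?_ h2
  filter_upwards [eventually_gt_atTop 0] with R hR
  have hsub : (∫ u in (lam * s)..((R ^ 2 + lam) * s),
      Complex.exp (-Complex.I * u) / (u : ℂ)) =
      (2 * Complex.exp (-(Complex.I * lam * s))) * ∫ y in (0:ℝ)..R, y • ffun lam s y :=
    subst_step lam s hlam hs hR
  show (Real.pi : ℂ) * Complex.exp (Complex.I * lam * s) *
      (∫ u in (lam * s)..((R ^ 2 + lam) * s), Complex.exp (-Complex.I * u) / (u : ℂ)) = _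
  rw [hsub, radial_step lam s hR, Complex.exp_neg]
  have hne := Complex.exp_ne_zero (Complex.I * lam * s)
  field_simp
  ring
  norm_num
end
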